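/- Let p* ∈ R_+^N be a probability vector and define e(v) := ∑_{j=0}^{N-1} p*_j · (|{j' : v_{j'} < v_j}|/N)^t for v ∈ R^N. Then sup over v ∈ R^N of e(v) equals H_t(p*), and the supremum is achieved by any vector v with pairwise distinct entries whose ordering agrees with an ordering of p*. -/
import Mathlib


/-- The `t`-th permuted moment of a vector `p ∈ ℝ^N`. -/
noncomputable def pmom (N t : ℕ) (p : Fin N → ℝ) : ℝ :=
  Finset.univ.sup' ⟨1, Finset.mem_univ 1⟩
    (fun σ : Equiv.Perm (Fin N) => ∑ i : Fin N, ((i : ℝ) / N) ^ t * p (σ i))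

/-- The functional `e(v) = ∑_j p*_j (|{j' : v_{j'} < v_j}|/N)^t`. -/
noncomputable def eFun (N t : ℕ) (p : Fin N → ℝ) (v : Fin N → ℝ) : ℝ :=
  ∑ j : Fin N, p j *
    (((Finset.univ.filter (fun j' => v j' < v j)).card : ℝ) / N) ^ t

lemma rank_card_eq (N : ℕ) (v : Fin N → ℝ) (σ : Equiv.Perm (Fin N)) (i : Fin N) :
    (Finset.univ.filter (fun j' => v j' < v (σ i))).card
      = (Finset.univ.filter (fun j => v (σ j) < v (σ i))).card := by
  apply Finset.card_equiv σ.symm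
  intro j'
  simp

lemma div_cast_le (N a b : ℕ) (hab : a ≤ b) : (a : ℝ) / N ≤ (b : ℝ) / N := by
  rw [div_eq_mul_inv, div_eq_mul_inv]
  exact mul_le_mul_of_nonneg_right (Nat.cast_le.mpr hab) (by positivity)

lemma hf_mono (N t : ℕ) : Monotone (fun i : Fin N => ((i : ℝ) / N) ^ t) := by
  intro a b hab
  exact pow_le_pow_left₀ (by positivity) (div_cast_le N a b hab) t

/-- `sup_v e(v) = H_t(p*)`, achieved by any vector with pairwise distinct entries
whose ordering agrees with an ordering of `p*`. -/
theorem eFun_sup_eq_pmom (N t : ℕ) (p : Fin N → ℝ)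
    (hp : ∀ i, 0 ≤ p i) (hsum : ∑ i : Fin N, p i = 1) :
    (∀ v : Fin N → ℝ, eFun N t p v ≤ pmom N t p) ∧
    (∀ v : Fin N → ℝ, Function.Injective v →
      (∃ σ : Equiv.Perm (Fin N),
        Monotone (fun i => v (σ i)) ∧ Monotone (fun i => p (σ i))) →
      eFun N t p v = pmom N t p) := by
  have hf := hf_mono N t
  -- for any v and any σ sorting v, eFun v ≤ the σ-sum
  have hub : ∀ (v : Fin N → ℝ) (σ : Equiv.Perm (Fin N)),
      Monotone (fun i => v (σ i)) →
      eFun N t p v ≤ ∑ i : Fin N, ((i : ℝ) / N) ^ t * p (σ i) := by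
    intro v σ hm
    rw [eFun, ← Equiv.sum_comp σ
      (fun j => p j * (((Finset.univ.filter (fun j' => v j' < v j)).card : ℝ) / N) ^ t)]
    apply Finset.sum_le_sum
    intro i _
    rw [mul_comm]
    apply mul_le_mul_of_nonneg_right _ (hp _)
    have hcard : ((Finset.univ.filter (fun j' => v j' < v (σ i))).card : ℕ) ≤ (i : ℕ) := by
      rw [rank_card_eq N v σ i]
      calc (Finset.univ.filter (fun j => v (σ j) < v (σ i))).card
          ≤ (Finset.univ.filter (fun j => j < i)).card := by
            apply Finset.card_le_card
            intro j hj
            simp only [Finset.mem_filter, Finset.mem_univ, true_and] at hj ⊢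
            by_contra hji
            exact absurd (hm (le_of_not_gt hji)) (not_le.mpr hj)
        _ = (i : ℕ) := by
            rw [show Finset.univ.filter (fun j : Fin N => j < i) = Finset.Iio i by
              ext j; simp]
            exact Fin.card_Iio i
    exact pow_le_pow_left₀ (by positivity) (div_cast_le N _ _ hcard) t
  constructor
  · intro v
    have hm := Tuple.monotone_sort v
    refine (hub v (Tuple.sort v) hm).trans ?_
    rw [pmom]
    exact Finset.le_sup' (fun τ : Equiv.Perm (Fin N) => ∑ i : Fin N, ((i : ℝ) / N) ^ t * p (τ i))
      (Finset.mem_univ (Tuple.sort v))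
  · rintro v hinj ⟨σ, hvσ, hpσ⟩
    have hs : StrictMono (fun i => v (σ i)) :=
      hvσ.strictMono_of_injective (hinj.comp σ.injective)
    -- eFun equals the σ-sum exactly
    have heq : eFun N t p v = ∑ i : Fin N, ((i : ℝ) / N) ^ t * p (σ i) := by
      rw [eFun, ← Equiv.sum_comp σ
        (fun j => p j * (((Finset.univ.filter (fun j' => v j' < v j)).card : ℝ) / N) ^ t)]
      apply Finset.sum_congr rfl
      intro i _
      rw [mul_comm]
      have hc : (Finset.univ.filter (fun j' => v j' < v (σ i))).card = (i : ℕ) := by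
        rw [rank_card_eq N v σ i,
          show Finset.univ.filter (fun j => v (σ j) < v (σ i))
            = Finset.univ.filter (fun j : Fin N => j < i) by
            ext j; simp [hs.lt_iff_lt],
          show Finset.univ.filter (fun j : Fin N => j < i) = Finset.Iio i by
            ext j; simp]
        exact Fin.card_Iio i
      rw [hc]
    rw [heq, pmom]
    refine le_antisymm (Finset.le_sup'
      (fun τ : Equiv.Perm (Fin N) => ∑ i : Fin N, ((i : ℝ) / N) ^ t * p (τ i))
      (Finset.mem_univ σ)) ?_
    apply Finset.sup'_le
    intro τ _
    have hmono : Monovary (fun i : Fin N => ((i : ℝ) / N) ^ t) (fun i => p (σ i)) :=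
      hf.monovary hpσ
    have := hmono.sum_smul_comp_perm_le_sum_smul (σ := τ.trans σ.symm)
    simp only [smul_eq_mul, Equiv.trans_apply] at this
    calc ∑ i : Fin N, ((i : ℝ) / N) ^ t * p (τ i)
        = ∑ i : Fin N, ((i : ℝ) / N) ^ t * p (σ (σ.symm (τ i))) := by
          simp
      _ ≤ _ := this
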